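/- arXiv:1511.07832 — 2 statements merged into one kernel-verified Lean document; each statement's English description precedes it below -/
import Mathlib

section
/- Let C'_{i,h} count lattice paths from (0,0) with i+h up-steps (1,1) and i down-steps (1,−1) staying in the strip 0 ≤ y ≤ h. Then C'_{0,h} = 1, C'_{n+1,h} = Σ_{j=0}^{n+1} C'_{j,h−1} C_{n+1−j,h} for h ≥ 1, and the generating functions satisfy C'_h(x) = C'_{h−1}(x)·C_h(x). Evaluation at x = 1/4 gives C'_h(1/4) = 2^{h+1}/(h+2), i.e. Σ_{i≥0} C'_{i,h}/4^i = 2^{h+1}/(h+2). -/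
/-- Height of the lattice path encoded by `s` after `j` steps. -/
def pathHeight {n : ℕ} (s : Fin n → Bool) (j : ℕ) : ℤ :=
  ∑ t ∈ Finset.range j, if h : t < n then (if s ⟨t, h⟩ then 1 else -1) else 0

/-- `C_{i,h}`: the number of Dyck paths of order `i` with height at most `h`. -/
noncomputable def boundedDyck (i h : ℕ) : ℕ :=
  Nat.card {s : Fin (2*i) → Bool //
    (∀ j ≤ 2*i, 0 ≤ pathHeight s j ∧ pathHeight s j ≤ (h : ℤ)) ∧
    pathHeight s (2*i) = 0}

/-- `C'_{i,h}`: the number of lattice paths from `(0,0)` with `i+h` up-steps and `i`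
down-steps staying in the strip `0 ≤ y ≤ h`. -/
noncomputable def boundedDyck' (i h : ℕ) : ℕ :=
  Nat.card {s : Fin (2*i+h) → Bool //
    (∀ j ≤ 2*i+h, 0 ≤ pathHeight s j ∧ pathHeight s j ≤ (h : ℤ)) ∧
    pathHeight s (2*i+h) = (h : ℤ)}

/-- The generating function `C_h(x) = Σ_i C_{i,h} x^i`. -/
noncomputable def boundedDyckGF (h : ℕ) (x : ℝ) : ℝ :=
  ∑' i : ℕ, (boundedDyck i h : ℝ) * x ^ i

/-- The generating function `C'_h(x) = Σ_i C'_{i,h} x^i`. -/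
noncomputable def boundedDyckGF' (h : ℕ) (x : ℝ) : ℝ :=
  ∑' i : ℕ, (boundedDyck' i h : ℝ) * x ^ i


namespace DyckAux

/-- Number of paths of length `m` in the strip `[0,h]` from `a` to `b`
(recursion on the last step). -/
def sN (h : ℕ) : ℕ → ℕ → ℕ → ℕ
  | 0, a, b => if a = b then 1 else 0
  | m+1, a, b =>
      (if b = 0 then 0 else sN h m a (b-1)) + (if b < h then sN h m a (b+1) else 0)

lemma sN_zero (h a b : ℕ) : sN h 0 a b = if a = b then 1 else 0 := rfl

lemma sN_succ (h m a b : ℕ) :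
    sN h (m+1) a b =
      (if b = 0 then 0 else sN h m a (b-1)) + (if b < h then sN h m a (b+1) else 0) := rfl

lemma sN_eq_zero_of_lt (h : ℕ) : ∀ m a b, a + m < b → sN h m a b = 0 := by
  intro m
  induction m with
  | zero => intro a b hab; rw [sN_zero, if_neg (by omega)]
  | succ m ih =>
      intro a b hab
      rw [sN_succ, ih a (b-1) (by omega)]
      rw [ih a (b+1) (by omega)]
      simp

lemma sN_diag (h : ℕ) : ∀ m a, a + m ≤ h → sN h m a (a+m) = 1 := by
  intro m
  induction m with
  | zero => intro a ha; simp [sN_zero]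
  | succ m ih =>
      intro a ha
      rw [show a + (m+1) = (a+m) + 1 by ring, sN_succ, if_neg (by omega)]
      rw [show a + m + 1 - 1 = a + m by omega, ih a (by omega)]
      rw [sN_eq_zero_of_lt h m a (a+m+1+1) (by omega)]
      simp

lemma sN_parity (h : ℕ) : ∀ m a b, (m + a + b) % 2 = 1 → sN h m a b = 0 := by
  intro m
  induction m with
  | zero => intro a b hab; rw [sN_zero, if_neg (by omega)]
  | succ m ih =>
      intro a b hab
      rw [sN_succ]
      rcases Nat.eq_zero_or_pos b with hb | hb
      · subst hb
        rw [if_pos rfl, ih a 1 (by omega)]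
        simp
      · rw [if_neg (by omega), ih a (b-1) (by omega), ih a (b+1) (by omega)]
        simp

lemma sN_symm (h : ℕ) : ∀ m a b, a ≤ h → b ≤ h → sN h m a b = sN h m (h-a) (h-b) := by
  intro m
  induction m with
  | zero =>
      intro a b ha hb
      rw [sN_zero, sN_zero]
      split_ifs <;> omega
  | succ m ih =>
      intro a b ha hb
      rw [sN_succ, sN_succ]
      by_cases hb0 : b = 0
      · subst hb0
        rcases Nat.eq_zero_or_pos h with hh | hh
        · subst hh; simp
        · rw [if_pos rfl, if_pos hh, if_neg (by omega), if_neg (by omega),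
            ih a 1 ha (by omega), show h - 1 = h - 0 - 1 by omega]
          simp [Nat.zero_add]
      · by_cases hbh : b = h
        · rw [if_neg hb0, if_neg (show ¬ b < h by omega), if_pos (show h - b = 0 by omega),
            if_pos (show h - b < h by omega), ih a (b-1) ha (by omega),
            show h - (b-1) = h - b + 1 by omega, show h - b = 0 by omega]
          simp
        · have hb1 : 1 ≤ b := by omega
          have hbh' : b < h := by omega
          rw [if_neg hb0, if_pos hbh', if_neg (by omega), if_pos (by omega),
            ih a (b-1) ha (by omega), ih a (b+1) ha (by omega),
            show h - (b-1) = h - b + 1 by omega, show h - (b+1) = h - b - 1 by omega]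
          ring

lemma sN_from_zero (h : ℕ) (hh : 1 ≤ h) : ∀ m b, sN h (m+1) 0 b = sN h m 1 b := by
  intro m
  induction m with
  | zero =>
      intro b
      rw [sN_succ, sN_zero, sN_zero, sN_zero]
      split_ifs <;> first | omega | (exfalso; assumption)
  | succ m ih =>
      intro b
      rw [sN_succ, ih (b-1), ih (b+1), sN_succ]


lemma sum_ite_zero_left (P : Prop) [Decidable P] (s : Finset ℕ) (c f : ℕ → ℕ) :
    (∑ m1 ∈ s, c m1 * (if P then 0 else f m1)) = if P then 0 else ∑ m1 ∈ s, c m1 * f m1 := by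
  split_ifs <;> simp

lemma sum_ite_zero_right (P : Prop) [Decidable P] (s : Finset ℕ) (c f : ℕ → ℕ) :
    (∑ m1 ∈ s, c m1 * (if P then f m1 else 0)) = if P then ∑ m1 ∈ s, c m1 * f m1 else 0 := by
  split_ifs <;> simp

/-- First-passage decomposition at the top level `h`. -/
lemma claim1 (h : ℕ) (hh : 1 ≤ h) :
    ∀ m, ∀ y ≤ h,
      sN h m 0 y = (if y < h then sN (h-1) m 0 y else 0) +
        ∑ m1 ∈ Finset.range m, sN (h-1) m1 0 (h-1) * sN h (m - 1 - m1) h y := by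
  intro m
  induction m with
  | zero =>
      intro y hy
      rw [Finset.range_zero, Finset.sum_empty, sN_zero, sN_zero]
      split_ifs <;> omega
  | succ m ih =>
      intro y hy
      have hs : (∑ m1 ∈ Finset.range (m+1), sN (h-1) m1 0 (h-1) * sN h (m + 1 - 1 - m1) h y)
          = ((if y = 0 then 0 else
                ∑ m1 ∈ Finset.range m, sN (h-1) m1 0 (h-1) * sN h (m - 1 - m1) h (y-1)) +
             (if y < h then
                ∑ m1 ∈ Finset.range m, sN (h-1) m1 0 (h-1) * sN h (m - 1 - m1) h (y+1)
              else 0)) +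
            (if h = y then sN (h-1) m 0 (h-1) else 0) := by
        rw [Finset.sum_range_succ, show m + 1 - 1 - m = 0 by omega, sN_zero]
        congr 1
        · rw [← sum_ite_zero_left (y = 0) _ _ (fun m1 => sN h (m - 1 - m1) h (y-1)),
              ← sum_ite_zero_right (y < h) _ _ (fun m1 => sN h (m - 1 - m1) h (y+1)),
              ← Finset.sum_add_distrib]
          refine Finset.sum_congr rfl fun m1 hm1 => ?_
          rw [Finset.mem_range] at hm1
          rw [show m + 1 - 1 - m1 = (m - 1 - m1) + 1 by omega, sN_succ, mul_add]
        · split_ifs <;> simp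
      rw [hs, sN_succ, sN_succ (h-1) m 0 y]
      by_cases hy0 : y = 0
      · subst hy0
        rw [ih (0+1) (by omega)]
        split_ifs <;> first | omega | ring1 | (exfalso; omega)
      · by_cases hyh : y < h
        · rw [ih (y-1) (by omega), ih (y+1) (by omega)]
          split_ifs <;> first | omega | ring1 | (exfalso; omega)
        · have hyh' : h = y := by omega
          subst hyh'
          rw [ih (h-1) (by omega)]
          split_ifs <;> first | omega | ring1 | (exfalso; omega)

/-- First-return decomposition at the bottom level `0`. -/
lemma claim2 (h : ℕ) (hh : 1 ≤ h) :
    ∀ m, ∀ y ≤ h,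
      sN h m 1 y = (if 1 ≤ y then sN (h-1) m 0 (y-1) else 0) +
        ∑ m1 ∈ Finset.range m, sN (h-1) m1 0 0 * sN h (m - 1 - m1) 0 y := by
  intro m
  induction m with
  | zero =>
      intro y hy
      rw [Finset.range_zero, Finset.sum_empty, sN_zero, sN_zero]
      split_ifs <;> omega
  | succ m ih =>
      intro y hy
      have hs : (∑ m1 ∈ Finset.range (m+1), sN (h-1) m1 0 0 * sN h (m + 1 - 1 - m1) 0 y)
          = ((if y = 0 then 0 else
                ∑ m1 ∈ Finset.range m, sN (h-1) m1 0 0 * sN h (m - 1 - m1) 0 (y-1)) +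
             (if y < h then
                ∑ m1 ∈ Finset.range m, sN (h-1) m1 0 0 * sN h (m - 1 - m1) 0 (y+1)
              else 0)) +
            (if 0 = y then sN (h-1) m 0 0 else 0) := by
        rw [Finset.sum_range_succ, show m + 1 - 1 - m = 0 by omega, sN_zero]
        congr 1
        · rw [← sum_ite_zero_left (y = 0) _ _ (fun m1 => sN h (m - 1 - m1) 0 (y-1)),
              ← sum_ite_zero_right (y < h) _ _ (fun m1 => sN h (m - 1 - m1) 0 (y+1)),
              ← Finset.sum_add_distrib]
          refine Finset.sum_congr rfl fun m1 hm1 => ?_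
          rw [Finset.mem_range] at hm1
          rw [show m + 1 - 1 - m1 = (m - 1 - m1) + 1 by omega, sN_succ, mul_add]
        · split_ifs <;> simp
      rw [hs, sN_succ, sN_succ (h-1) m 0 (y-1)]
      by_cases hy0 : y = 0
      · subst hy0
        rw [ih (0+1) (by omega)]
        simp only [Nat.add_sub_cancel]
        split_ifs <;> first | omega | ring1 | (exfalso; omega)
      · by_cases hyh : y < h
        · rw [ih (y-1) (by omega), ih (y+1) (by omega)]
          simp only [Nat.add_sub_cancel]
          rw [show y - 1 + 1 = y from by omega]
          split_ifs <;> first | omega | ring1 | (exfalso; omega)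
        · have hyh' : h = y := by omega
          subst hyh'
          rw [ih (h-1) (by omega)]
          split_ifs <;> first | omega | ring1 | (exfalso; omega)


lemma pathHeight_zero {n : ℕ} (s : Fin n → Bool) : pathHeight s 0 = 0 := by
  simp [pathHeight]

lemma pathHeight_snoc_le {m : ℕ} (t : Fin m → Bool) (a : Bool) {j : ℕ} (hj : j ≤ m) :
    pathHeight (Fin.snoc t a) j = pathHeight t j := by
  unfold pathHeight
  refine Finset.sum_congr rfl fun x hx => ?_
  rw [Finset.mem_range] at hx
  have hxm : x < m := lt_of_lt_of_le hx hj
  rw [dif_pos (by omega : x < m + 1), dif_pos hxm,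
    show (⟨x, by omega⟩ : Fin (m+1)) = Fin.castSucc ⟨x, hxm⟩ from rfl, Fin.snoc_castSucc]

lemma pathHeight_snoc_last {m : ℕ} (t : Fin m → Bool) (a : Bool) :
    pathHeight (Fin.snoc t a) (m+1) = pathHeight t m + (if a then 1 else -1) := by
  unfold pathHeight
  rw [Finset.sum_range_succ]
  congr 1
  · exact pathHeight_snoc_le t a le_rfl
  · rw [dif_pos (by omega : m < m + 1),
      show (⟨m, by omega⟩ : Fin (m+1)) = Fin.last m from rfl, Fin.snoc_last]

/-- The subtype of paths with an endpoint outside the strip is empty. -/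
lemma card_strip_empty (h m : ℕ) (e : ℤ) (hbound : ¬(0 ≤ e ∧ e ≤ (h:ℤ))) :
    Nat.card {s : Fin m → Bool //
      (∀ j ≤ m, 0 ≤ pathHeight s j ∧ pathHeight s j ≤ (h:ℤ)) ∧ pathHeight s m = e} = 0 := by
  have : IsEmpty {s : Fin m → Bool //
      (∀ j ≤ m, 0 ≤ pathHeight s j ∧ pathHeight s j ≤ (h:ℤ)) ∧ pathHeight s m = e} := by
    refine ⟨fun s => hbound ?_⟩
    have := s.2.1 m le_rfl
    rw [s.2.2] at this
    exact this
  exact Nat.card_of_isEmpty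

lemma card_strip_succ (h m : ℕ) (e : ℤ) (h0 : 0 ≤ e) (hh : e ≤ (h:ℤ)) :
    Nat.card {s : Fin (m+1) → Bool //
      (∀ j ≤ m+1, 0 ≤ pathHeight s j ∧ pathHeight s j ≤ (h:ℤ)) ∧ pathHeight s (m+1) = e}
    = Nat.card {s : Fin m → Bool //
        (∀ j ≤ m, 0 ≤ pathHeight s j ∧ pathHeight s j ≤ (h:ℤ)) ∧ pathHeight s m = e - 1}
      + Nat.card {s : Fin m → Bool //
        (∀ j ≤ m, 0 ≤ pathHeight s j ∧ pathHeight s j ≤ (h:ℤ)) ∧ pathHeight s m = e + 1} := by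
  rw [← Nat.card_sum]
  refine Nat.card_congr ?_
  have hiff : ∀ (t : Fin m → Bool) (a : Bool),
      ((∀ j ≤ m+1, 0 ≤ pathHeight (Fin.snoc t a) j ∧ pathHeight (Fin.snoc t a) j ≤ (h:ℤ)) ∧
        pathHeight (Fin.snoc t a) (m+1) = e)
      ↔ ((∀ j ≤ m, 0 ≤ pathHeight t j ∧ pathHeight t j ≤ (h:ℤ)) ∧
          pathHeight t m = e - (if a then 1 else -1)) := by
    intro t a
    constructor
    · rintro ⟨hb, hlast⟩
      refine ⟨fun j hj => ?_, ?_⟩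
      · rw [← pathHeight_snoc_le t a hj]; exact hb j (by omega)
      · rw [pathHeight_snoc_last] at hlast; linarith
    · rintro ⟨hb, hlast⟩
      constructor
      · intro j hj
        rcases Nat.lt_or_ge j (m+1) with hj' | hj'
        · rw [pathHeight_snoc_le t a (by omega)]; exact hb j (by omega)
        · have hj'' : j = m+1 := by omega
          subst hj''
          rw [pathHeight_snoc_last, hlast]
          constructor <;> linarith
      · rw [pathHeight_snoc_last, hlast]; ring
  have hQ1 : ∀ (t : Fin m → Bool), ((∀ j ≤ m+1, 0 ≤ pathHeight (Fin.snoc t true) j ∧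
        pathHeight (Fin.snoc t true) j ≤ (h:ℤ)) ∧ pathHeight (Fin.snoc t true) (m+1) = e)
      ↔ ((∀ j ≤ m, 0 ≤ pathHeight t j ∧ pathHeight t j ≤ (h:ℤ)) ∧ pathHeight t m = e - 1) := by
    intro t
    rw [hiff t true]
    simp
  have hQ2 : ∀ (t : Fin m → Bool), ((∀ j ≤ m+1, 0 ≤ pathHeight (Fin.snoc t false) j ∧
        pathHeight (Fin.snoc t false) j ≤ (h:ℤ)) ∧ pathHeight (Fin.snoc t false) (m+1) = e)
      ↔ ((∀ j ≤ m, 0 ≤ pathHeight t j ∧ pathHeight t j ≤ (h:ℤ)) ∧ pathHeight t m = e + 1) := by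
    intro t
    rw [hiff t false]
    constructor
    · rintro ⟨hb, hl⟩; exact ⟨hb, by rw [hl]; simp [sub_neg_eq_add]⟩
    · rintro ⟨hb, hl⟩; exact ⟨hb, by rw [hl]; simp [sub_neg_eq_add]⟩
  refine
    { toFun := fun s =>
        if ha : s.1 (Fin.last m) = true then
          Sum.inl ⟨Fin.init s.1, (hQ1 (Fin.init s.1)).mp (by
            have h2 := s.2
            rw [← Fin.snoc_init_self s.1] at h2
            rw [show Fin.snoc (Fin.init s.1) (s.1 (Fin.last m))
                = Fin.snoc (Fin.init s.1) true by rw [ha]] at h2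
            exact h2)⟩
        else
          Sum.inr ⟨Fin.init s.1, (hQ2 (Fin.init s.1)).mp (by
            have ha' : s.1 (Fin.last m) = false := by
              revert ha; cases s.1 (Fin.last m) <;> simp
            have h2 := s.2
            rw [← Fin.snoc_init_self s.1] at h2
            rw [show Fin.snoc (Fin.init s.1) (s.1 (Fin.last m))
                = Fin.snoc (Fin.init s.1) false by rw [ha']] at h2
            exact h2)⟩
      invFun := Sum.elim
        (fun t => ⟨Fin.snoc t.1 true, (hQ1 t.1).mpr t.2⟩)
        (fun t => ⟨Fin.snoc t.1 false, (hQ2 t.1).mpr t.2⟩)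
      left_inv := ?_
      right_inv := ?_ }
  · rintro ⟨s, hs⟩
    by_cases ha : s (Fin.last m) = true
    · simp only [dif_pos ha, Sum.elim_inl]
      apply Subtype.ext
      show Fin.snoc (Fin.init s) true = s
      conv_rhs => rw [← Fin.snoc_init_self s]
      rw [← ha]
    · simp only [dif_neg ha, Sum.elim_inr]
      apply Subtype.ext
      show Fin.snoc (Fin.init s) false = s
      have ha' : s (Fin.last m) = false := by
        revert ha; cases s (Fin.last m) <;> simp
      conv_rhs => rw [← Fin.snoc_init_self s]
      rw [← ha']
  · rintro (⟨t, ht⟩ | ⟨t, ht⟩) <;> simp [Fin.snoc_last, Fin.init_snoc]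

/-- The number of strip paths equals the transfer-matrix count. -/
lemma card_strip (h : ℕ) : ∀ (m : ℕ) (e : ℤ),
    Nat.card {s : Fin m → Bool //
      (∀ j ≤ m, 0 ≤ pathHeight s j ∧ pathHeight s j ≤ (h:ℤ)) ∧ pathHeight s m = e}
    = if 0 ≤ e ∧ e ≤ (h:ℤ) then sN h m 0 e.toNat else 0 := by
  intro m
  induction m with
  | zero =>
      intro e
      by_cases he : e = 0
      · subst he
        rw [if_pos ⟨le_refl 0, Int.natCast_nonneg h⟩, sN_zero, if_pos (show 0 = Int.toNat 0 from rfl)]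
        rw [Nat.card_eq_one_iff_unique]
        constructor
        · exact ⟨fun a b => Subtype.ext (funext fun i => i.elim0)⟩
        · refine ⟨⟨fun i => i.elim0, fun j hj => ?_, pathHeight_zero _⟩⟩
          have hj0 : j = 0 := by omega
          subst hj0
          rw [pathHeight_zero]
          exact ⟨le_refl 0, Int.natCast_nonneg h⟩
      · have hempty : IsEmpty {s : Fin 0 → Bool //
            (∀ j ≤ 0, 0 ≤ pathHeight s j ∧ pathHeight s j ≤ (h:ℤ)) ∧ pathHeight s 0 = e} := by
          refine ⟨fun s => he ?_⟩
          have := s.2.2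
          rw [pathHeight_zero] at this
          omega
        rw [Nat.card_of_isEmpty, sN_zero]
        split_ifs <;> omega
  | succ m ih =>
      intro e
      by_cases hbound : 0 ≤ e ∧ e ≤ (h:ℤ)
      · rw [card_strip_succ h m e hbound.1 hbound.2, ih (e-1), ih (e+1), if_pos hbound, sN_succ]
        rw [show (e-1).toNat = e.toNat - 1 from by omega, show (e+1).toNat = e.toNat + 1 from by omega]
        split_ifs <;> first | omega | ring1 | (exfalso; omega)
      · rw [card_strip_empty h (m+1) e hbound, if_neg hbound]


lemma boundedDyck_eq (i h : ℕ) : boundedDyck i h = sN h (2*i) 0 0 := by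
  unfold boundedDyck
  rw [card_strip h (2*i) 0, if_pos ⟨le_refl 0, Int.natCast_nonneg h⟩]
  rfl

lemma boundedDyck'_eq (i h : ℕ) : boundedDyck' i h = sN h (2*i+h) 0 h := by
  unfold boundedDyck'
  rw [card_strip h (2*i+h) (h:ℤ), if_pos ⟨Int.natCast_nonneg h, le_refl _⟩, Int.toNat_natCast]

lemma bd'_zero (h : ℕ) : boundedDyck' 0 h = 1 := by
  rw [boundedDyck'_eq, show 2*0+h = h by omega]
  have := sN_diag h h 0 (by omega)
  simpa using this

lemma bd_zero (h : ℕ) : boundedDyck 0 h = 1 := by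
  rw [boundedDyck_eq, show 2*0 = 0 by ring, sN_zero]
  simp

lemma bd_strip0 (i : ℕ) : boundedDyck i 0 = if i = 0 then 1 else 0 := by
  rw [boundedDyck_eq]
  rcases Nat.eq_zero_or_pos i with hi | hi
  · subst hi; simp [sN_zero]
  · rw [if_neg (by omega), show 2*i = (2*i-1)+1 by omega, sN_succ]
    simp

lemma bd'_strip0 (i : ℕ) : boundedDyck' i 0 = if i = 0 then 1 else 0 := by
  rw [boundedDyck'_eq]
  rcases Nat.eq_zero_or_pos i with hi | hi
  · subst hi; simp [sN_zero]
  · rw [if_neg (by omega), show 2*i+0 = (2*i-1)+1 by omega, sN_succ]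
    simp

lemma bd'_conv (h : ℕ) (hh : 1 ≤ h) (n : ℕ) :
    boundedDyck' (n+1) h =
      ∑ j ∈ Finset.range (n+2), boundedDyck' j (h-1) * boundedDyck (n+1-j) h := by
  rw [boundedDyck'_eq]
  rw [claim1 h hh (2*(n+1)+h) h le_rfl, if_neg (lt_irrefl h), zero_add]
  have hstep1 : ∀ m1 ∈ Finset.range (2*(n+1)+h),
      sN (h-1) m1 0 (h-1) * sN h (2*(n+1)+h - 1 - m1) h h
      = sN (h-1) m1 0 (h-1) * sN h (2*(n+1)+h - 1 - m1) 0 0 := by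
    intro m1 _
    rw [sN_symm h (2*(n+1)+h - 1 - m1) h h le_rfl le_rfl, Nat.sub_self]
  rw [Finset.sum_congr rfl hstep1]
  have himage : (Finset.range (n+2)).image (fun j => 2*j + (h-1)) ⊆ Finset.range (2*(n+1)+h) := by
    intro m1 hm1
    rw [Finset.mem_image] at hm1
    obtain ⟨j, hj, rfl⟩ := hm1
    rw [Finset.mem_range] at hj ⊢
    omega
  rw [← Finset.sum_subset himage (by
    intro m1 hm1 hm1'
    rw [Finset.mem_range] at hm1
    by_cases hlt : m1 < h - 1
    · rw [sN_eq_zero_of_lt (h-1) m1 0 (h-1) (by omega), zero_mul]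
    · by_cases hpar : (m1 + 0 + (h-1)) % 2 = 1
      · rw [sN_parity (h-1) m1 0 (h-1) hpar, zero_mul]
      · exfalso
        apply hm1'
        rw [Finset.mem_image]
        exact ⟨(m1 - (h-1))/2, Finset.mem_range.mpr (by omega), by omega⟩)]
  rw [Finset.sum_image (by intro a _ b _ hab; simp only at hab; omega)]
  refine Finset.sum_congr rfl fun j hj => ?_
  rw [Finset.mem_range] at hj
  rw [boundedDyck'_eq, boundedDyck_eq,
    show 2*(n+1)+h - 1 - (2*j + (h-1)) = 2*(n+1-j) by omega,
    show 2*j + (h-1) = 2*j + (h-1) from rfl]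

lemma bd_conv (h : ℕ) (hh : 1 ≤ h) (n : ℕ) :
    boundedDyck (n+1) h =
      ∑ j ∈ Finset.range (n+1), boundedDyck j (h-1) * boundedDyck (n-j) h := by
  rw [boundedDyck_eq, show 2*(n+1) = (2*n+1)+1 by ring, sN_from_zero h hh,
    claim2 h hh (2*n+1) 0 (by omega), if_neg (by omega), zero_add]
  have himage : (Finset.range (n+1)).image (fun j => 2*j) ⊆ Finset.range (2*n+1) := by
    intro m1 hm1
    rw [Finset.mem_image] at hm1
    obtain ⟨j, hj, rfl⟩ := hm1
    rw [Finset.mem_range] at hj ⊢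
    omega
  rw [← Finset.sum_subset himage (by
    intro m1 hm1 hm1'
    rw [Finset.mem_range] at hm1
    by_cases hpar : (m1 + 0 + 0) % 2 = 1
    · rw [sN_parity (h-1) m1 0 0 hpar, zero_mul]
    · exfalso
      apply hm1'
      rw [Finset.mem_image]
      exact ⟨m1/2, Finset.mem_range.mpr (by omega), by omega⟩)]
  rw [Finset.sum_image (by intro a _ b _ hab; simp only at hab; omega)]
  refine Finset.sum_congr rfl fun j hj => ?_
  rw [Finset.mem_range] at hj
  rw [boundedDyck_eq, boundedDyck_eq, show 2*n+1 - 1 - 2*j = 2*(n-j) by omega]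

lemma bd'_conv_all (k n : ℕ) :
    boundedDyck' n (k+1) =
      ∑ j ∈ Finset.range (n+1), boundedDyck' j k * boundedDyck (n-j) (k+1) := by
  rcases n with _ | n
  · rw [Finset.range_one, Finset.sum_singleton, bd'_zero, bd'_zero, bd_zero]
  · rw [bd'_conv (k+1) (by omega) n]
    simp only [Nat.add_sub_cancel]


/-- Partial-sum Cauchy product inequality for nonnegative reals. -/
lemma sum_conv_le (a b : ℕ → ℝ) (ha : ∀ i, 0 ≤ a i) (hb : ∀ i, 0 ≤ b i) (N : ℕ) :
    ∑ i ∈ Finset.range N, ∑ j ∈ Finset.range (i+1), a j * b (i-j)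
      ≤ (∑ j ∈ Finset.range N, a j) * (∑ l ∈ Finset.range N, b l) := by
  rw [Finset.sum_mul_sum, ← Finset.sum_product']
  rw [← Finset.sum_sigma (Finset.range N) (fun i => Finset.range (i+1))
      (fun p => a p.2 * b (p.1 - p.2))]
  have hinj : ∀ p ∈ (Finset.range N).sigma (fun i => Finset.range (i+1)),
      ∀ q ∈ (Finset.range N).sigma (fun i => Finset.range (i+1)),
      (fun p : Σ _ : ℕ, ℕ => (p.2, p.1 - p.2)) p = (fun p : Σ _ : ℕ, ℕ => (p.2, p.1 - p.2)) q →
      p = q := by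
    rintro ⟨i, j⟩ hp ⟨i', j'⟩ hq heq
    simp only [Finset.mem_sigma, Finset.mem_range] at hp hq
    simp only [Prod.mk.injEq] at heq
    have hj : j = j' := heq.1
    have hi : i = i' := by omega
    subst hj; subst hi; rfl
  calc ∑ p ∈ (Finset.range N).sigma (fun i => Finset.range (i+1)), a p.2 * b (p.1 - p.2)
      = ∑ q ∈ ((Finset.range N).sigma (fun i => Finset.range (i+1))).image
          (fun p : Σ _ : ℕ, ℕ => (p.2, p.1 - p.2)), a q.1 * b q.2 :=
        (Finset.sum_image (f := fun q : ℕ × ℕ => a q.1 * b q.2) hinj).symm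
    _ ≤ ∑ q ∈ (Finset.range N) ×ˢ (Finset.range N), a q.1 * b q.2 := by
        apply Finset.sum_le_sum_of_subset_of_nonneg
        · intro q hq
          rw [Finset.mem_image] at hq
          obtain ⟨⟨i, j⟩, hp, rfl⟩ := hq
          rw [Finset.mem_sigma, Finset.mem_range, Finset.mem_range] at hp
          rw [Finset.mem_product, Finset.mem_range, Finset.mem_range]
          constructor <;> omega
        · intro q _ _
          exact mul_nonneg (ha _) (hb _)

lemma norm_eq_self (f : ℕ → ℝ) (hf : ∀ i, 0 ≤ f i) : (fun i => ‖f i‖) = f :=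
  funext fun i => Real.norm_of_nonneg (hf i)

/-- Summability and value of `C_h(1/4)`. -/
lemma dyck_tsum : ∀ h : ℕ, Summable (fun i => (boundedDyck i h : ℝ) / 4^i) ∧
    ∑' i : ℕ, (boundedDyck i h : ℝ) / 4^i = 2*((h:ℝ)+1)/((h:ℝ)+2) := by
  intro h
  induction h with
  | zero =>
      have hf : (fun i => (boundedDyck i 0 : ℝ) / 4^i) = fun i => if i = 0 then 1 else 0 := by
        funext i
        rw [bd_strip0 i]
        split_ifs with hi
        · subst hi; norm_num
        · norm_num
      rw [hf]
      constructor
      · apply summable_of_ne_finset_zero (s := {0})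
        intro i hi
        rw [if_neg (by simpa using hi)]
      · rw [tsum_eq_single 0 (fun i hi => by rw [if_neg hi])]
        norm_num
  | succ k ih =>
      set a : ℕ → ℝ := fun j => (boundedDyck j k : ℝ) / 4^j with ha_def
      set f : ℕ → ℝ := fun i => (boundedDyck i (k+1) : ℝ) / 4^i with hf_def
      have ha0 : ∀ i, 0 ≤ a i := fun i => by positivity
      have hf0 : ∀ i, 0 ≤ f i := fun i => by positivity
      have hA : ∑' j, a j = 2*((k:ℝ)+1)/((k:ℝ)+2) := ih.2
      have hApos : 0 ≤ ∑' j, a j := tsum_nonneg ha0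
      have hrec : ∀ n : ℕ, f (n+1) = (1/4) * ∑ j ∈ Finset.range (n+1), a j * f (n-j) := by
        intro n
        have := bd_conv (k+1) (by omega) n
        simp only [Nat.add_sub_cancel] at this
        show (boundedDyck (n+1) (k+1) : ℝ)/4^(n+1) = _
        rw [this]
        push_cast
        rw [Finset.sum_div, Finset.mul_sum]
        refine Finset.sum_congr rfl fun j hj => ?_
        rw [Finset.mem_range] at hj
        show (boundedDyck j k:ℝ) * (boundedDyck (n-j) (k+1):ℝ) / 4^(n+1)
          = 1/4 * ((boundedDyck j k:ℝ)/4^j * ((boundedDyck (n-j) (k+1):ℝ)/4^(n-j)))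
        rw [show (4:ℝ)^(n+1) = 4 * (4^j * 4^(n-j)) by
          rw [← pow_add, show j + (n-j) = n by omega]; ring]
        field_simp
      have hf01 : f 0 = 1 := by
        show (boundedDyck 0 (k+1):ℝ)/4^0 = 1
        rw [bd_zero]; norm_num
      set B : ℝ := 2*((k:ℝ)+2)/((k:ℝ)+3) with hB_def
      have hBpos : 0 ≤ B := by positivity
      have hk2 : ((k:ℝ)+2) ≠ 0 := by positivity
      have hk3 : ((k:ℝ)+3) ≠ 0 := by positivity
      have hq : (∑' j, a j) / 4 * B + 1 ≤ B := by
        rw [hA, hB_def]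
        apply le_of_eq
        field_simp
        ring
      have hbound : ∀ N, ∑ i ∈ Finset.range N, f i ≤ B := by
        intro N
        induction N with
        | zero => simpa using hBpos
        | succ N ihN =>
            rw [Finset.sum_range_succ']
            have h1 : ∑ i ∈ Finset.range N, f (i+1)
                = (1/4) * ∑ i ∈ Finset.range N, ∑ j ∈ Finset.range (i+1), a j * f (i-j) := by
              rw [Finset.mul_sum]
              exact Finset.sum_congr rfl fun i _ => hrec i
            rw [h1, hf01]
            have h2 : ∑ i ∈ Finset.range N, ∑ j ∈ Finset.range (i+1), a j * f (i-j)
                ≤ (∑ j ∈ Finset.range N, a j) * (∑ l ∈ Finset.range N, f l) :=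
              sum_conv_le a f ha0 hf0 N
            have h3 : (∑ j ∈ Finset.range N, a j) * (∑ l ∈ Finset.range N, f l)
                ≤ (∑' j, a j) * B := by
              apply mul_le_mul (Summable.sum_le_tsum _ (fun i _ => ha0 i) ih.1) ihN
                (Finset.sum_nonneg fun i _ => hf0 i) hApos
            calc (1/4) * ∑ i ∈ Finset.range N, ∑ j ∈ Finset.range (i+1), a j * f (i-j) + 1
                ≤ (1/4) * ((∑' j, a j) * B) + 1 := by
                  have := le_trans h2 h3
                  linarith
              _ = (∑' j, a j)/4 * B + 1 := by ring
              _ ≤ B := hq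
      have hsummable : Summable f := summable_of_sum_range_le hf0 hbound
      refine ⟨hsummable, ?_⟩
      have hanorm : Summable fun i => ‖a i‖ := by rw [norm_eq_self a ha0]; exact ih.1
      have hfnorm : Summable fun i => ‖f i‖ := by rw [norm_eq_self f hf0]; exact hsummable
      have hT : (∑' i, f i) = 1 + (1/4) * ((∑' j, a j) * (∑' i, f i)) := by
        rw [tsum_mul_tsum_eq_tsum_sum_range_of_summable_norm hanorm hfnorm]
        rw [Summable.tsum_eq_zero_add hsummable, hf01]
        congr 1
        rw [← tsum_mul_left]
        exact tsum_congr fun n => hrec n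
      rw [hA] at hT
      push_cast
      have hgoal : (∑' i, f i) = 2*((k:ℝ)+1+1)/((k:ℝ)+1+2) := by
        have hlin : (∑' i, f i) * (((k:ℝ)+3)/(2*((k:ℝ)+2))) = 1 := by
          field_simp at hT ⊢
          linarith [hT]
        rw [show (2:ℝ)*((k:ℝ)+1+1)/((k:ℝ)+1+2) = 2*((k:ℝ)+2)/((k:ℝ)+3) by ring_nf]
        field_simp at hlin ⊢
        linarith [hlin]
      exact hgoal


/-- Summability and value of `C'_h(1/4)`. -/
lemma dyck'_tsum : ∀ h : ℕ, Summable (fun i => (boundedDyck' i h : ℝ) / 4^i) ∧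
    ∑' i : ℕ, (boundedDyck' i h : ℝ) / 4^i = 2^(h+1)/((h:ℝ)+2) := by
  intro h
  induction h with
  | zero =>
      have hf : (fun i => (boundedDyck' i 0 : ℝ) / 4^i) = fun i => if i = 0 then 1 else 0 := by
        funext i
        rw [bd'_strip0 i]
        split_ifs with hi
        · subst hi; norm_num
        · norm_num
      rw [hf]
      constructor
      · apply summable_of_ne_finset_zero (s := {0})
        intro i hi
        rw [if_neg (by simpa using hi)]
      · rw [tsum_eq_single 0 (fun i hi => by rw [if_neg hi])]
        norm_num
  | succ k ih =>
      have hb := dyck_tsum (k+1)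
      have ha'0 : ∀ i, (0:ℝ) ≤ (boundedDyck' i k : ℝ)/4^i := fun i => by positivity
      have hb0 : ∀ i, (0:ℝ) ≤ (boundedDyck i (k+1) : ℝ)/4^i := fun i => by positivity
      have hanorm : Summable fun i => ‖(boundedDyck' i k : ℝ)/4^i‖ := by
        rw [norm_eq_self _ ha'0]; exact ih.1
      have hbnorm : Summable fun i => ‖(boundedDyck i (k+1) : ℝ)/4^i‖ := by
        rw [norm_eq_self _ hb0]; exact hb.1
      have hconv : ∀ n : ℕ, (boundedDyck' n (k+1) : ℝ)/4^n
          = ∑ j ∈ Finset.range (n+1),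
              ((boundedDyck' j k : ℝ)/4^j) * ((boundedDyck (n-j) (k+1) : ℝ)/4^(n-j)) := by
        intro n
        rw [bd'_conv_all k n]
        push_cast
        rw [Finset.sum_div]
        refine Finset.sum_congr rfl fun j hj => ?_
        rw [Finset.mem_range] at hj
        rw [show (4:ℝ)^n = 4^j * 4^(n-j) by rw [← pow_add, show j + (n-j) = n by omega]]
        field_simp
      have hfeq : (fun n => (boundedDyck' n (k+1) : ℝ)/4^n)
          = fun n => ∑ j ∈ Finset.range (n+1),
              ((boundedDyck' j k : ℝ)/4^j) * ((boundedDyck (n-j) (k+1) : ℝ)/4^(n-j)) :=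
        funext hconv
      constructor
      · rw [hfeq]
        exact (summable_norm_sum_mul_range_of_summable_norm hanorm hbnorm).of_norm
      · have := tsum_mul_tsum_eq_tsum_sum_range_of_summable_norm hanorm hbnorm
        rw [ih.2, hb.2] at this
        calc ∑' n, (boundedDyck' n (k+1) : ℝ)/4^n
            = ∑' n, ∑ j ∈ Finset.range (n+1),
                ((boundedDyck' j k : ℝ)/4^j) * ((boundedDyck (n-j) (k+1) : ℝ)/4^(n-j)) :=
              tsum_congr hconv
          _ = 2^(k+1)/((k:ℝ)+2) * (2*(((k+1:ℕ):ℝ)+1)/(((k+1:ℕ):ℝ)+2)) := this.symm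
          _ = 2^(k+1+1)/(((k+1:ℕ):ℝ)+2) := by
              push_cast
              have h2 : ((k:ℝ)+2) ≠ 0 := by positivity
              have h3 : ((k:ℝ)+1+2) ≠ 0 := by positivity
              field_simp
              ring


lemma gf'_eval (h : ℕ) : boundedDyckGF' h (1/4) = 2^(h+1)/((h:ℝ)+2) := by
  unfold boundedDyckGF'
  have hc : ∀ i : ℕ, (boundedDyck' i h : ℝ) * (1/4:ℝ)^i = (boundedDyck' i h : ℝ)/4^i := by
    intro i
    rw [div_pow, one_pow]
    ring
  rw [tsum_congr hc]
  exact (dyck'_tsum h).2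

lemma gf_prod (k : ℕ) (x : ℝ) (hx : |x| ≤ 1/4) :
    boundedDyckGF' (k+1) x = boundedDyckGF' k x * boundedDyckGF (k+1) x := by
  have habs : ∀ (c i : ℕ), ‖(c:ℝ) * x^i‖ ≤ (c:ℝ)/4^i := by
    intro c i
    rw [norm_mul, norm_pow, Real.norm_natCast, Real.norm_eq_abs]
    calc (c:ℝ) * |x|^i ≤ (c:ℝ) * (1/4)^i := by
          apply mul_le_mul_of_nonneg_left (pow_le_pow_left₀ (abs_nonneg x) hx i)
            (Nat.cast_nonneg c)
      _ = (c:ℝ)/4^i := by rw [div_pow, one_pow]; ring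
  have h1 : Summable fun i => ‖(boundedDyck' i k : ℝ) * x^i‖ :=
    Summable.of_nonneg_of_le (fun i => norm_nonneg _) (fun i => habs _ i) (dyck'_tsum k).1
  have h2 : Summable fun i => ‖(boundedDyck i (k+1) : ℝ) * x^i‖ :=
    Summable.of_nonneg_of_le (fun i => norm_nonneg _) (fun i => habs _ i) (dyck_tsum (k+1)).1
  unfold boundedDyckGF' boundedDyckGF
  rw [tsum_mul_tsum_eq_tsum_sum_range_of_summable_norm h1 h2]
  refine tsum_congr fun n => ?_
  rw [bd'_conv_all k n]
  push_cast
  rw [Finset.sum_mul]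
  refine Finset.sum_congr rfl fun j hj => ?_
  rw [Finset.mem_range] at hj
  rw [show x^n = x^j * x^(n-j) by rw [← pow_add, show j + (n-j) = n by omega]]
  ring


end DyckAux

/-- `C'_{0,h} = 1`, the recurrence `C'_{n+1,h} = Σ_{j=0}^{n+1} C'_{j,h−1} C_{n+1−j,h}` for
`h ≥ 1`, the identity `C'_h(x) = C'_{h−1}(x) C_h(x)` (for `|x|` small), and
`C'_h(1/4) = 2^{h+1}/(h+2)`, i.e. `Σ_i C'_{i,h}/4^i = 2^{h+1}/(h+2)`. -/
theorem boundedDyck'_formulas :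
    (∀ h : ℕ, boundedDyck' 0 h = 1) ∧
    (∀ n h : ℕ, 1 ≤ h →
      boundedDyck' (n+1) h =
        ∑ j ∈ Finset.range (n+2), boundedDyck' j (h-1) * boundedDyck (n+1-j) h) ∧
    (∀ h : ℕ, 1 ≤ h → ∀ x : ℝ, |x| ≤ 1/4 →
      boundedDyckGF' h x = boundedDyckGF' (h-1) x * boundedDyckGF h x) ∧
    (∀ h : ℕ, boundedDyckGF' h (1/4) = 2 ^ (h+1) / (h + 2)) ∧
    (∀ h : ℕ, ∑' i : ℕ, (boundedDyck' i h : ℝ) / 4 ^ i = 2 ^ (h+1) / (h + 2)) := by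
  refine ⟨DyckAux.bd'_zero, ?_, ?_, ?_, ?_⟩
  · intro n h hh
    exact DyckAux.bd'_conv h hh n
  · intro h hh x hx
    obtain ⟨k, rfl⟩ : ∃ k, h = k + 1 := ⟨h - 1, by omega⟩
    simpa using DyckAux.gf_prod k x hx
  · intro h
    exact DyckAux.gf'_eval h
  · intro h
    exact (DyckAux.dyck'_tsum h).2
end

section
/- Let X ⊆ S^1 be finite, 0 < r < 1/2, and let VR(X;r) be the Vietoris–Rips complex of X at scale r (simplices are subsets of X of diameter less than r, in the arc-length metric). If x_0 ∈ X is not in the image of f_r : X → X, then x_0 is dominated in VR(X;r) by some vertex in f_r(X). Explicitly, letting x_0' be the first point clockwise from x_0 lying in f_r(X), we have X ∩ (x_0 − r, x_0 + r) ⊆ X ∩ (x_0' − r, x_0' + r), so every simplex containing x_0 remains a simplex after adding x_0'. -/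
noncomputable section

instance : Fact ((0:ℝ) < 1) := ⟨zero_lt_one⟩

/-- Clockwise distance on the circle `S¹ = ℝ/ℤ`: the representative of `y - x` in `[0,1)`. -/
noncomputable def cdist (x y : AddCircle (1:ℝ)) : ℝ :=
  ((AddCircle.equivIco 1 0) (y - x)).1

/-- The arc-length metric on `S¹`. -/
noncomputable def arcDist (x y : AddCircle (1:ℝ)) : ℝ :=
  min (cdist x y) (cdist y x)

/-- `f` is the cyclic dynamical system map `f_r` on the finite set `X`. -/
def IsCyclicMap (X : Finset (AddCircle (1:ℝ))) (r : ℝ)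
    (f : AddCircle (1:ℝ) → AddCircle (1:ℝ)) : Prop :=
  ∀ x ∈ X, f x ∈ X ∧ cdist x (f x) < r ∧
    ∀ y ∈ X, cdist x y < r → cdist x y ≤ cdist x (f x)

lemma cdist_coe (a b : ℝ) : cdist ↑a ↑b = Int.fract (b - a) := by
  unfold cdist
  rw [show ((b:AddCircle (1:ℝ)) - ↑a) = ((b - a : ℝ) : AddCircle (1:ℝ)) from
    (QuotientAddGroup.mk_sub _ b a).symm]
  rw [AddCircle.coe_equivIco_mk_apply]
  simp

lemma cdist_nonneg (x y : AddCircle (1:ℝ)) : 0 ≤ cdist x y :=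
  (((AddCircle.equivIco 1 0) (y - x)).2).1

lemma cdist_lt_one (x y : AddCircle (1:ℝ)) : cdist x y < 1 := by
  have := (((AddCircle.equivIco 1 0) (y - x)).2).2
  exact lt_of_lt_of_eq this (zero_add 1)

lemma coe_eq_coe_iff (a b : ℝ) : (a : AddCircle (1:ℝ)) = ↑b ↔ ∃ z : ℤ, b - a = z := by
  rw [QuotientAddGroup.eq_iff_sub_mem]
  constructor
  · rintro h
    obtain ⟨z, hz⟩ := AddSubgroup.mem_zmultiples_iff.mp h
    rw [zsmul_eq_mul, mul_one] at hz
    exact ⟨-z, by push_cast; linarith⟩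
  · rintro ⟨z, hz⟩
    refine AddSubgroup.mem_zmultiples_iff.mpr ⟨-z, ?_⟩
    rw [zsmul_eq_mul, mul_one]; push_cast; linarith

lemma cdist_eq_zero_iff (x y : AddCircle (1:ℝ)) : cdist x y = 0 ↔ x = y := by
  induction x using QuotientAddGroup.induction_on with | H a =>
  induction y using QuotientAddGroup.induction_on with | H b =>
  rw [cdist_coe, coe_eq_coe_iff]
  constructor
  · intro h
    obtain ⟨z, hz⟩ := Int.fract_eq_fract.mp (h.trans Int.fract_zero.symm)
    exact ⟨z, by linarith⟩
  · rintro ⟨z, hz⟩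
    rw [hz]; exact Int.fract_intCast z

lemma cdist_self (x : AddCircle (1:ℝ)) : cdist x x = 0 := (cdist_eq_zero_iff x x).mpr rfl

lemma fract_insert_add (A B : ℝ) : Int.fract (A + Int.fract B) = Int.fract (A + B) :=
  Int.fract_eq_fract.mpr ⟨-⌊B⌋, by unfold Int.fract; push_cast; ring⟩

lemma fract_insert_sub (A B : ℝ) : Int.fract (Int.fract A - B) = Int.fract (A - B) :=
  Int.fract_eq_fract.mpr ⟨-⌊A⌋, by unfold Int.fract; push_cast; ring⟩

lemma fract_sub_one (a : ℝ) : Int.fract (a - 1) = Int.fract a := by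
  simpa using Int.fract_sub_int a 1

lemma cdist_cocycle (x y z : AddCircle (1:ℝ)) :
    cdist x z = Int.fract (cdist x y + cdist y z) := by
  induction x using QuotientAddGroup.induction_on with | H a =>
  induction y using QuotientAddGroup.induction_on with | H b =>
  induction z using QuotientAddGroup.induction_on with | H c =>
  rw [cdist_coe, cdist_coe, cdist_coe]
  exact Int.fract_eq_fract.mpr ⟨⌊b - a⌋ + ⌊c - b⌋, by unfold Int.fract; push_cast; ring⟩

lemma cdist_sub_coe (x y : AddCircle (1:ℝ)) (t : ℝ) :
    cdist (x - (t : AddCircle (1:ℝ))) y = Int.fract (t + cdist x y) := by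
  induction x using QuotientAddGroup.induction_on with | H a =>
  induction y using QuotientAddGroup.induction_on with | H b =>
  rw [show ((a : AddCircle (1:ℝ)) - ↑t) = ((a - t : ℝ) : AddCircle (1:ℝ)) from
    (QuotientAddGroup.mk_sub _ a t).symm]
  rw [cdist_coe, cdist_coe]
  exact Int.fract_eq_fract.mpr ⟨⌊b - a⌋, by unfold Int.fract; push_cast; ring⟩

lemma cdist_rev {x y : AddCircle (1:ℝ)} (h : x ≠ y) : cdist y x = 1 - cdist x y := by
  induction x using QuotientAddGroup.induction_on with | H a =>
  induction y using QuotientAddGroup.induction_on with | H b =>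
  rw [cdist_coe, cdist_coe, show a - b = -(b-a) by ring, Int.fract_neg]
  intro h0
  exact h ((cdist_eq_zero_iff _ _).mp (by rw [cdist_coe]; exact h0))

/-- Key characterization: `arcDist x y < r` iff `y` lies strictly inside the arc
`(x - r, x + r)`, measured as clockwise distance from `x - r` being in `(0, 2r)`. -/
lemma arc_iff {r : ℝ} (hr0 : 0 < r) (hr1 : r < 1/2) (x y : AddCircle (1:ℝ)) :
    arcDist x y < r ↔
      (0 < cdist (x - ((r : ℝ) : AddCircle (1:ℝ))) y ∧
        cdist (x - ((r : ℝ) : AddCircle (1:ℝ))) y < 2 * r) := by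
  rw [cdist_sub_coe]
  by_cases hxy : x = y
  · subst hxy
    rw [cdist_self]
    rw [show Int.fract (r + 0) = r from by rw [add_zero]; exact Int.fract_eq_self.mpr ⟨le_of_lt hr0, by linarith⟩]
    unfold arcDist
    rw [cdist_self]
    constructor
    · intro _; exact ⟨hr0, by linarith⟩
    · intro _; simpa using hr0
  · have hc0 : cdist x y ≠ 0 := fun h => hxy ((cdist_eq_zero_iff x y).mp h)
    set c := cdist x y with hc
    have hcpos : 0 < c := lt_of_le_of_ne (cdist_nonneg x y) (Ne.symm hc0)
    have hclt : c < 1 := cdist_lt_one x y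
    have hrev : cdist y x = 1 - c := cdist_rev hxy
    unfold arcDist
    rw [← hc, hrev, min_lt_iff]
    by_cases hcase : r + c < 1
    · have hu : Int.fract (r + c) = r + c := Int.fract_eq_self.mpr ⟨by linarith, hcase⟩
      rw [hu]
      constructor
      · rintro (h | h)
        · exact ⟨by linarith, by linarith⟩
        · linarith
      · rintro ⟨_, h⟩
        left; linarith
    · rw [not_lt] at hcase
      have hu : Int.fract (r + c) = r + c - 1 := by
        rw [← fract_sub_one, Int.fract_eq_self]
        refine ⟨?_, ?_⟩ <;> linarith
      rw [hu]
      constructor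
      · rintro (h | h)
        · linarith
        · exact ⟨by linarith, by linarith⟩
      · rintro ⟨h, _⟩
        right; linarith

lemma arcDist_comm (x y : AddCircle (1:ℝ)) : arcDist x y = arcDist y x := min_comm _ _

/-- If `x₀ ∈ X` is not in the image of `f_r` and `x₀'` is the first point clockwise from
`x₀` lying in `f_r(X)`, then `X ∩ (x₀ − r, x₀ + r) ⊆ X ∩ (x₀' − r, x₀' + r)`; hence `x₀`
is dominated by `x₀'` in the Vietoris–Rips complex `VR(X;r)`: every simplex (subset of `X`
of diameter `< r`) containing `x₀` stays a simplex after adding `x₀'`. -/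
theorem not_in_image_dominated
    (X : Finset (AddCircle (1:ℝ))) (r : ℝ) (hr0 : 0 < r) (hr1 : r < 1/2)
    (f : AddCircle (1:ℝ) → AddCircle (1:ℝ)) (hf : IsCyclicMap X r f)
    (x₀ : AddCircle (1:ℝ)) (hx₀ : x₀ ∈ X)
    (hx₀nim : ∀ y ∈ X, f y ≠ x₀)
    (x₀' : AddCircle (1:ℝ)) (hx₀'im : x₀' ∈ Finset.image f X)
    (hx₀'first : ∀ y ∈ Finset.image f X, cdist x₀ x₀' ≤ cdist x₀ y) :
    (∀ y ∈ X,
      (0 < cdist (x₀ - ((r : ℝ) : AddCircle (1:ℝ))) y ∧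
        cdist (x₀ - ((r : ℝ) : AddCircle (1:ℝ))) y < 2 * r) →
      (0 < cdist (x₀' - ((r : ℝ) : AddCircle (1:ℝ))) y ∧
        cdist (x₀' - ((r : ℝ) : AddCircle (1:ℝ))) y < 2 * r)) ∧
    (∀ σ : Finset (AddCircle (1:ℝ)), σ ⊆ X → x₀ ∈ σ →
      (∀ a ∈ σ, ∀ b ∈ σ, arcDist a b < r) →
      ∀ a ∈ insert x₀' σ, ∀ b ∈ insert x₀' σ, arcDist a b < r) := by
  -- basic facts about d := cdist x₀ x₀'
  set d := cdist x₀ x₀' with hd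
  have hx₀ne : x₀ ≠ x₀' := by
    intro h
    obtain ⟨z, hzX, hz⟩ := Finset.mem_image.mp hx₀'im
    exact hx₀nim z hzX (hz.trans h.symm)
  have hd0 : 0 < d :=
    lt_of_le_of_ne (cdist_nonneg _ _) fun h => hx₀ne ((cdist_eq_zero_iff _ _).mp h.symm)
  have hdr : d < r := by
    have h1 := hx₀'first (f x₀) (Finset.mem_image_of_mem f hx₀)
    have h2 := (hf x₀ hx₀).2.1
    linarith
  have partA : ∀ y ∈ X,
      (0 < cdist (x₀ - ((r : ℝ) : AddCircle (1:ℝ))) y ∧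
        cdist (x₀ - ((r : ℝ) : AddCircle (1:ℝ))) y < 2 * r) →
      (0 < cdist (x₀' - ((r : ℝ) : AddCircle (1:ℝ))) y ∧
        cdist (x₀' - ((r : ℝ) : AddCircle (1:ℝ))) y < 2 * r) := by
    intro y hy h
    rw [cdist_sub_coe] at h
    set c := cdist x₀ y with hc
    have hcpos : 0 ≤ c := cdist_nonneg _ _
    have hclt : c < 1 := cdist_lt_one _ _
    set u := Int.fract (r + c) with hu
    -- u > d
    have hud : d < u := by
      by_contra hle
      push_neg at hle
      have hur : u < r := lt_of_le_of_lt hle hdr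
      -- must be in the wrap-around case
      have hcase : ¬ (r + c < 1) := by
        intro hcase
        have he : u = r + c := by
          rw [hu, Int.fract_eq_self]; exact ⟨by linarith, hcase⟩
        linarith [hle, hur, hcpos]
      push_neg at hcase
      have huval : u = r + c - 1 := by
        rw [hu, ← fract_sub_one, Int.fract_eq_self]
        refine ⟨?_, ?_⟩ <;> linarith
      have hu0 : 0 < u := h.1
      -- y ≠ x₀, cdist y x₀ = 1 - c = r - u
      have hyne : x₀ ≠ y := by
        intro hxy
        have : c = 0 := by rw [hc, hxy, cdist_self]
        have : (1/2 : ℝ) < 1 - r := by linarith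
        linarith
      have hrevyx : cdist y x₀ = 1 - c := cdist_rev hyne
      have hyx₀lt : cdist y x₀ < r := by rw [hrevyx]; linarith
      obtain ⟨hfyX, hw, hmax⟩ := hf y hy
      have h1 : cdist y x₀ ≤ cdist y (f y) := hmax x₀ hx₀ hyx₀lt
      set w := cdist y (f y) with hwdef
      -- cdist x₀ (f y) = c + w - 1 < u ≤ d
      have hco : cdist x₀ (f y) = Int.fract (c + w) := cdist_cocycle x₀ y (f y)
      rw [hrevyx] at h1
      have hsum : cdist x₀ (f y) = c + w - 1 := by
        rw [hco, ← fract_sub_one, Int.fract_eq_self]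
        refine ⟨?_, ?_⟩ <;> linarith
      have hfirst := hx₀'first (f y) (Finset.mem_image_of_mem f hy)
      rw [hsum] at hfirst
      linarith
    -- now compute cdist (x₀' - r) y = u - d
    have hrev' : cdist x₀' x₀ = 1 - d := cdist_rev hx₀ne
    have hx₀'y : cdist x₀' y = Int.fract (1 - d + c) := by
      rw [cdist_cocycle x₀' x₀ y, hrev', ← hc]
    have hval : cdist (x₀' - ((r : ℝ) : AddCircle (1:ℝ))) y = u - d := by
      rw [cdist_sub_coe, hx₀'y, fract_insert_add,
        show r + (1 - d + c) = ((r + c) - d) + 1 by ring, Int.fract_add_one,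
        ← fract_insert_sub (r + c) d, ← hu]
      rw [Int.fract_eq_self]
      refine ⟨by linarith, ?_⟩
      have := h.2
      linarith
    rw [hval]
    exact ⟨by linarith, by linarith [h.2]⟩
  refine ⟨partA, ?_⟩
  intro σ hσX hx₀σ hσ a ha b hb
  have key : ∀ z ∈ σ, arcDist x₀' z < r := by
    intro z hzσ
    have h1 : arcDist x₀ z < r := hσ x₀ hx₀σ z hzσ
    exact (arc_iff hr0 hr1 x₀' z).mpr
      (partA z (hσX hzσ) ((arc_iff hr0 hr1 x₀ z).mp h1))
  rw [Finset.mem_insert] at ha hb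
  rcases ha with ha | ha <;> rcases hb with hb | hb
  · subst ha; subst hb
    unfold arcDist; rw [cdist_self]; simpa using hr0
  · subst ha; exact key b hb
  · subst hb; rw [arcDist_comm]; exact key a ha
  · exact hσ a ha b hb
end
end
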